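/- Let 0 → H• → J• → K• → 0 be a short exact sequence of cochain complexes of sheaves (or more generally of objects in an abelian category) such that each H^k is an injective object and all differentials of H• vanish. If for every k the induced sequence on cohomology 0 → H^k(H•) → H^k(J•) → H^k(K•) → 0 is exact, then there exists a morphism of complexes s•: K• → J• with g• ∘ s• = id_{K•}, i.e. the sequence splits as a sequence of complexes. -/
import Mathlib


open CategoryTheory
open CategoryTheory.Limits

/-- Lemma `sec` of the paper, direction (i) ⇒ (ii): a degreewise short exact
sequence of cochain complexes `0 → H• → J• → K• → 0` in an abelian category,
with each `H^k` injective and all differentials of `H•` zero, splits as a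
sequence of complexes provided the induced sequences on cohomology
`0 → H^k(H•) → H^k(J•) → H^k(K•) → 0` are exact for all `k`. -/
theorem stmt0 {C : Type*} [Category C] [Abelian C]
    (H J K : CochainComplex C ℤ) (f : H ⟶ J) (g : J ⟶ K)
    (hfg : f ≫ g = 0)
    (hinj : ∀ k : ℤ, Injective (H.X k))
    (hdiff : ∀ i j : ℤ, H.d i j = 0)
    (hses : ∀ k : ℤ, (ShortComplex.mk (f.f k) (g.f k)
      (by simp [← HomologicalComplex.comp_f, hfg])).ShortExact)
    (hcoh : ∀ k : ℤ, (ShortComplex.mk (HomologicalComplex.homologyMap f k)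
      (HomologicalComplex.homologyMap g k)
      (by simp [← HomologicalComplex.homologyMap_comp, hfg])).ShortExact) :
    ∃ s : K ⟶ J, s ≫ g = 𝟙 K := by
  -- degreewise retraction of f
  have hr : ∀ k : ℤ, ∃ r : J.X k ⟶ H.X k, f.f k ≫ r = 𝟙 _ := by
    intro k
    haveI := (hses k).mono_f
    haveI := hinj k
    exact ⟨Injective.factorThru (𝟙 _) (f.f k), Injective.comp_factorThru _ _⟩
  choose r hrr using hr
  -- degreewise section of g
  have hs : ∀ k : ℤ, ∃ s : K.X k ⟶ J.X k,
      g.f k ≫ s = 𝟙 (J.X k) - r k ≫ f.f k ∧ s ≫ g.f k = 𝟙 _ := by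
    intro k
    haveI := (hses k).epi_g
    obtain ⟨s, hsg⟩ := (hses k).exact.desc' (𝟙 (J.X k) - r k ≫ f.f k)
      (by simp [reassoc_of% (hrr k)])
    refine ⟨s, hsg, ?_⟩
    rw [← cancel_epi (g.f k), ← Category.assoc, hsg]
    simp [← HomologicalComplex.comp_f, hfg]
  choose s hsgl hsgr using hs
  -- key step: correcting homotopy
  have hstep : ∀ j k : ℤ, j + 1 = k → ∃ w : K.X k ⟶ H.X k,
      K.d j k ≫ (w ≫ f.f k) = -(s j ≫ J.d j k - K.d j k ≫ s k) := by
    rintro j k rfl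
    set θ : K.X j ⟶ J.X (j + 1) := s j ≫ J.d j (j + 1) - K.d j (j + 1) ≫ s (j + 1) with hθ
    have hθg : θ ≫ g.f (j + 1) = 0 := by
      simp only [hθ, Preadditive.sub_comp, Category.assoc, ← g.comm,
        reassoc_of% (hsgr j), hsgr, Category.comp_id, sub_self]
    -- lift θ through f
    haveI := (hses (j + 1)).mono_f
    obtain ⟨τ, hτ⟩ := (hses (j + 1)).exact.lift' θ hθg
    have hτ' : τ ≫ f.f (j + 1) = θ := hτ
    -- τ vanishes on cycles
    have hτc : K.iCycles j ≫ τ = 0 := by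
      have hb : K.iCycles j ≫ τ ≫ f.f (j + 1)
          = K.iCycles j ≫ s j ≫ J.d j (j + 1) := by
        rw [hτ', hθ, Preadditive.comp_sub,
          ← Category.assoc (K.iCycles j) (K.d j (j + 1)), K.iCycles_d, zero_comp, sub_zero]
      set α : K.cycles j ⟶ H.cycles (j + 1) :=
        H.liftCycles (K.iCycles j ≫ τ) (j + 1 + 1) (CochainComplex.next ℤ _)
          (by simp [hdiff]) with hα
      have hαπ : α ≫ H.homologyπ (j + 1) ≫ HomologicalComplex.homologyMap f (j + 1) = 0 := by
        rw [HomologicalComplex.homologyπ_naturality, ← Category.assoc, hα,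
          HomologicalComplex.liftCycles_comp_cyclesMap]
        exact J.liftCycles_homologyπ_eq_zero_of_boundary _ (j + 1 + 1)
          (CochainComplex.next ℤ _) (K.iCycles j ≫ s j)
          (by rw [Category.assoc, hb, Category.assoc])
      have hαπ0 : α ≫ H.homologyπ (j + 1) = 0 := by
        haveI : Mono (HomologicalComplex.homologyMap f (j + 1)) := (hcoh (j + 1)).mono_f
        rw [← cancel_mono (HomologicalComplex.homologyMap f (j + 1)), zero_comp,
          Category.assoc]
        exact hαπ
      have hiso : IsIso (H.homologyπ (j + 1)) :=
        H.isIso_homologyπ j (j + 1) ((ComplexShape.up ℤ).prev_eq' (by simp)) (hdiff j (j + 1))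
      have hα0 : α = 0 := by
        rw [← cancel_mono (H.homologyπ (j + 1)), zero_comp]
        exact hαπ0
      calc K.iCycles j ≫ τ = α ≫ H.iCycles (j + 1) := (H.liftCycles_i _ _ _ _).symm
        _ = 0 := by rw [hα0, zero_comp]
    -- descend -τ along the image factorization of d, then extend by injectivity
    have hz : kernel.ι (Limits.factorThruImage (K.d j (j + 1))) ≫ K.d j (j + 1) = 0 := by
      calc kernel.ι (Limits.factorThruImage (K.d j (j + 1))) ≫ K.d j (j + 1)
          = kernel.ι (Limits.factorThruImage (K.d j (j + 1)))
            ≫ Limits.factorThruImage (K.d j (j + 1)) ≫ Limits.image.ι (K.d j (j + 1)) := by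
            rw [Limits.image.fac]
        _ = 0 := by rw [← Category.assoc, kernel.condition, zero_comp]
    have hker : kernel.ι (Limits.factorThruImage (K.d j (j + 1))) ≫ τ = 0 := by
      have hlift := K.liftCycles_i (kernel.ι (Limits.factorThruImage (K.d j (j + 1))))
        (j + 1) (CochainComplex.next ℤ _) hz
      rw [← hlift, Category.assoc, hτc, comp_zero]
    set γ : Limits.image (K.d j (j + 1)) ⟶ H.X (j + 1) :=
      Abelian.epiDesc (Limits.factorThruImage (K.d j (j + 1))) (-τ)
        (by rw [Preadditive.comp_neg, hker, neg_zero]) with hγ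
    haveI := hinj (j + 1)
    refine ⟨Injective.factorThru γ (Limits.image.ι (K.d j (j + 1))), ?_⟩
    have hdw : K.d j (j + 1) ≫ Injective.factorThru γ (Limits.image.ι (K.d j (j + 1))) = -τ := by
      calc K.d j (j + 1) ≫ Injective.factorThru γ (Limits.image.ι (K.d j (j + 1)))
          = (Limits.factorThruImage (K.d j (j + 1)) ≫ Limits.image.ι (K.d j (j + 1)))
            ≫ Injective.factorThru γ (Limits.image.ι (K.d j (j + 1))) := by
            rw [Limits.image.fac]
        _ = Limits.factorThruImage (K.d j (j + 1)) ≫ γ := by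
            rw [Category.assoc, Injective.comp_factorThru]
        _ = -τ := by rw [hγ, Abelian.comp_epiDesc]
    rw [← Category.assoc, hdw, Preadditive.neg_comp, hτ']
  -- choose corrections at every degree
  have hW : ∀ k : ℤ, ∃ w : K.X k ⟶ H.X k, ∀ j : ℤ, j + 1 = k →
      K.d j k ≫ (w ≫ f.f k) = -(s j ≫ J.d j k - K.d j k ≫ s k) := by
    intro k
    obtain ⟨w, hw⟩ := hstep (k - 1) k (by ring)
    refine ⟨w, fun j hj => ?_⟩
    obtain rfl : j = k - 1 := by omega
    exact hw
  choose W hWp using hW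
  -- the corrected section is a chain map
  refine ⟨{ f := fun k => s k - W k ≫ f.f k, comm' := ?_ }, ?_⟩
  · rintro k j (rfl : k + 1 = j)
    have hfd : f.f k ≫ J.d k (k + 1) = 0 := by
      rw [f.comm, hdiff, zero_comp]
    have hWc := hWp (k + 1) k rfl
    rw [Preadditive.sub_comp, Category.assoc, hfd, comp_zero, sub_zero,
      Preadditive.comp_sub, hWc]
    abel
  · ext k
    simp only [HomologicalComplex.comp_f, HomologicalComplex.id_f,
      Preadditive.sub_comp, Category.assoc, hsgr]
    rw [← HomologicalComplex.comp_f f g, hfg]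
    simp
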